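/- In the same example, the criterion certifies the scaled inclusion: for 0 < r ≤ √2/2, the 6×6 matrix C with c = 1/4 given by C = [[c,0,0,c,r/2,0],[0,c,−c,0,0,−r/2],[0,−c,c,0,0,r/2],[c,0,0,c,r/2,0],[r/2,0,0,r/2,1−2c,0],[0,−r/2,r/2,0,0,1−2c]] is positive semidefinite and satisfies I_2 = ∑_{i=1}^3 C_{ii}, diag(1,−1) = (1/r)(C_{13}+C_{31}), and E_{12}+E_{21} = (1/r)(C_{23}+C_{32}). -/

import Mathlib

/-- The explicit 6×6 certificate matrix (with c = 1/4) for the containment of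
the disc of radius r in the unit disc, indexed by 3×3 blocks of size 2×2. -/
noncomputable def scaledDiscCert (r : ℝ) :
    Matrix (Fin 3 × Fin 2) (Fin 3 × Fin 2) ℝ :=
  Matrix.of fun p q =>
    (!![1/4, 0, 0, 1/4, r/2, 0;
        0, 1/4, -(1/4), 0, 0, -(r/2);
        0, -(1/4), 1/4, 0, 0, r/2;
        1/4, 0, 0, 1/4, r/2, 0;
        r/2, 0, 0, r/2, 1 - 2*(1/4), 0;
        0, -(r/2), r/2, 0, 0, 1 - 2*(1/4)] : Matrix (Fin 6) (Fin 6) ℝ)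
      (finProdFinEquiv p) (finProdFinEquiv q)



lemma cv1 {α : Type*} {n : ℕ} (a : α) (u : Fin (n+1) → α) : Matrix.vecCons a u 1 = u 0 := rfl
lemma cv2 {α : Type*} {n : ℕ} (a : α) (u : Fin (n+2) → α) : Matrix.vecCons a u 2 = u 1 := rfl
lemma cv3 {α : Type*} {n : ℕ} (a : α) (u : Fin (n+3) → α) : Matrix.vecCons a u 3 = u 2 := rfl
lemma cv4 {α : Type*} {n : ℕ} (a : α) (u : Fin (n+4) → α) : Matrix.vecCons a u 4 = u 3 := rfl
lemma cv5 {α : Type*} {n : ℕ} (a : α) (u : Fin (n+5) → α) : Matrix.vecCons a u 5 = u 4 := rfl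

lemma vec6_four {α : Type*} (a b c d e f : α) : ![a,b,c,d,e,f] 4 = e := rfl
lemma vec6_five {α : Type*} (a b c d e f : α) : ![a,b,c,d,e,f] 5 = f := rfl

lemma m6_psd (r : ℝ) (hr2 : r ^ 2 ≤ 1 / 2) :
    (!![1/4, 0, 0, 1/4, r/2, 0;
        0, 1/4, -(1/4), 0, 0, -(r/2);
        0, -(1/4), 1/4, 0, 0, r/2;
        1/4, 0, 0, 1/4, r/2, 0;
        r/2, 0, 0, r/2, 1 - 2*(1/4), 0;
        0, -(r/2), r/2, 0, 0, 1 - 2*(1/4)] : Matrix (Fin 6) (Fin 6) ℝ).PosSemidef := by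
  rw [Matrix.posSemidef_iff_dotProduct_mulVec]
  constructor
  · ext i j
    fin_cases i <;> fin_cases j <;>
      simp [Matrix.conjTranspose_apply, vec6_four, vec6_five, cv1, cv2, cv3, cv4, cv5, Matrix.cons_val_zero]
  · intro x
    have expand : ∀ v : Fin 6 → ℝ, ∑ i : Fin 6, v i =
        v 0 + v 1 + v 2 + v 3 + v 4 + v 5 := by
      intro v; simp [Fin.sum_univ_six]
    simp only [dotProduct, Matrix.mulVec, star, expand, vec6_four, vec6_five, cv1, cv2, cv3, cv4, cv5, Matrix.cons_val_zero,
      Matrix.of_apply, Matrix.cons_val_zero, Pi.star_apply, star_trivial, id]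
    nlinarith [sq_nonneg (x 0 + x 3 + 2 * r * x 4), sq_nonneg (x 2 - x 1 + 2 * r * x 5),
      sq_nonneg (x 4), sq_nonneg (x 5), sq_nonneg (x 0 + x 3), sq_nonneg (x 2 - x 1)]

/-- In the disc example, the criterion certifies the scaled inclusion
r·S_A ⊆ S_B for 0 < r ≤ √2/2: the matrix `scaledDiscCert r` is psd and
satisfies I₂ = ∑ᵢ C_{ii}, diag(1,−1) = (1/r)(C₁₃+C₃₁) and
E₁₂+E₂₁ = (1/r)(C₂₃+C₃₂). -/
theorem scaled_disc_criterion (r : ℝ) (hr0 : 0 < r)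
    (hr : r ≤ Real.sqrt 2 / 2) :
    (scaledDiscCert r).PosSemidef ∧
    (∀ s t : Fin 2, (∑ i : Fin 3, scaledDiscCert r (i, s) (i, t)) =
      (1 : Matrix (Fin 2) (Fin 2) ℝ) s t) ∧
    (∀ s t : Fin 2, !![(1 : ℝ), 0; 0, -1] s t =
      (1 / r) * (scaledDiscCert r (0, s) (2, t) + scaledDiscCert r (2, s) (0, t))) ∧
    (∀ s t : Fin 2, !![(0 : ℝ), 1; 1, 0] s t =
      (1 / r) * (scaledDiscCert r (1, s) (2, t) + scaledDiscCert r (2, s) (1, t))) := by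
  have hr2 : r ^ 2 ≤ 1 / 2 := by
    nlinarith [Real.sq_sqrt (by norm_num : (0:ℝ) ≤ 2), Real.sqrt_nonneg 2]
  refine ⟨?_, ?_, ?_, ?_⟩
  · have := (m6_psd r hr2).submatrix (fun p : Fin 3 × Fin 2 => (finProdFinEquiv p : Fin 6))
    convert this using 2
    rfl
  · intro s t
    fin_cases s <;> fin_cases t <;>
      simp [scaledDiscCert, Fin.sum_univ_three, finProdFinEquiv, Matrix.one_apply, vec6_four, vec6_five, cv1, cv2, cv3, cv4, cv5, Matrix.cons_val_zero] <;> norm_num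
  · intro s t
    fin_cases s <;> fin_cases t <;>
      simp [scaledDiscCert, finProdFinEquiv, vec6_four, vec6_five, cv1, cv2, cv3, cv4, cv5, Matrix.cons_val_zero] <;> field_simp <;> norm_num
  · intro s t
    fin_cases s <;> fin_cases t <;>
      simp [scaledDiscCert, finProdFinEquiv, vec6_four, vec6_five, cv1, cv2, cv3, cv4, cv5, Matrix.cons_val_zero] <;> field_simp
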